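/- Let M be an n×n matrix over a commutative ring and let 0 ≤ k ≤ n. Then C(n,k)·per(M) = Σ_{S,S'} per(M(S,S'))·per(M(S̄,S̄')), where the sum is over all pairs of k-element subsets S, S' of [n]. -/

import Mathlib

open Finset

/-- The permanent of the submatrix of `M` with rows `S` and columns `S'`,
computed as a sum over bijections from `S` to `S'`. -/
def subPer {n : ℕ} {R : Type*} [CommRing R] (M : Matrix (Fin n) (Fin n) R)
    (S S' : Finset (Fin n)) : R :=
  ∑ e : {x // x ∈ S} ≃ {x // x ∈ S'}, ∏ i : {x // x ∈ S}, M i (e i)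

lemma subtypeCongr_apply' {α : Type*} {p q : α → Prop} [DecidablePred p] [DecidablePred q]
    (e : { x // p x } ≃ { x // q x }) (f : { x // ¬p x } ≃ { x // ¬q x }) (a : α) :
    Equiv.subtypeCongr e f a = if h : p a then (e ⟨a, h⟩ : α) else (f ⟨a, h⟩ : α) := by
  by_cases h : p a <;> simp [Equiv.subtypeCongr, h]

/-- key lemma: for fixed `S`, `S'`, the product of subpermanents is a sum over
permutations mapping `S` onto `S'`. -/
lemma subPer_mul_subPer {n : ℕ} {R : Type*} [CommRing R] (M : Matrix (Fin n) (Fin n) R)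
    (S S' : Finset (Fin n)) :
    subPer M S S' * subPer M Sᶜ S'ᶜ =
      ∑ σ ∈ (univ : Finset (Equiv.Perm (Fin n))).filter
        (fun σ => ∀ i, i ∈ S ↔ σ i ∈ S'), ∏ i, M i (σ i) := by
  classical
  -- transport between `x ∈ Sᶜ` and `¬ x ∈ S`
  have hS : ∀ x : Fin n, ¬ x ∈ S ↔ x ∈ Sᶜ := fun x => (Finset.mem_compl).symm
  have hS' : ∀ x : Fin n, x ∈ S'ᶜ ↔ ¬ x ∈ S' := fun x => Finset.mem_compl
  set g1 := Equiv.subtypeEquivRight hS with hg1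
  set g2 := Equiv.subtypeEquivRight hS' with hg2
  have hps : subPer M S S' * subPer M Sᶜ S'ᶜ =
      ∑ ef : ({x // x ∈ S} ≃ {x // x ∈ S'}) × ({x // x ∈ Sᶜ} ≃ {x // x ∈ S'ᶜ}),
        (∏ i : {x // x ∈ S}, M i (ef.1 i)) * ∏ i : {x // x ∈ Sᶜ}, M i (ef.2 i) := by
    rw [subPer, subPer, Finset.sum_mul_sum, Fintype.sum_prod_type]
  rw [hps]
  refine Finset.sum_bij' (i := fun ef _ => Equiv.subtypeCongr ef.1 (g1.trans (ef.2.trans g2)))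
    (j := fun σ hσ => (Equiv.subtypeEquiv σ (by simpa using (Finset.mem_filter.mp hσ).2),
      Equiv.subtypeEquiv σ (fun a => by
        simp only [Finset.mem_compl]
        exact not_congr ((Finset.mem_filter.mp hσ).2 a)))) ?_ ?_ ?_ ?_ ?_
  · intro ef _
    simp only [Finset.mem_filter, Finset.mem_univ, true_and]
    intro i
    rw [subtypeCongr_apply']
    by_cases h : i ∈ S
    · simp only [dif_pos h]
      exact ⟨fun _ => (ef.1 ⟨i, h⟩).2, fun _ => h⟩
    · simp only [dif_neg h]
      constructor
      · intro h'; exact absurd h' h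
      · intro h'
        exfalso
        have := (g2 (ef.2 (g1 ⟨i, h⟩))).2
        simp only [hg2, Equiv.subtypeEquivRight] at this
        exact this h'
  · intro σ hσ; exact Finset.mem_univ _
  · intro ef _
    ext x
    · simp only [Equiv.subtypeEquiv_apply]
      rw [subtypeCongr_apply', dif_pos x.2]
    · have hx : ¬ (x : Fin n) ∈ S := Finset.mem_compl.mp x.2
      simp only [Equiv.subtypeEquiv_apply, subtypeCongr_apply', dif_neg hx, hg1, hg2,
        Equiv.subtypeEquivRight, Equiv.trans_apply, Equiv.refl_apply]
      rfl
  · intro σ hσ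
    ext i
    rw [subtypeCongr_apply']
    by_cases h : i ∈ S
    · simp [h]
    · simp [h, hg1, hg2, Equiv.subtypeEquivRight]
      rfl
  · intro ef _
    rw [← Fintype.prod_subtype_mul_prod_subtype (· ∈ S) (fun i => M i _)]
    congr 1
    · refine Finset.prod_congr (by congr!) fun x _ => ?_
      rw [subtypeCongr_apply', dif_pos x.2]
    · rw [← Equiv.prod_comp g1.symm (fun x : {x // ¬ x ∈ S} => M x _)]
      refine Finset.prod_congr (by congr!) fun x _ => ?_
      have hx : ¬ (x : Fin n) ∈ S := Finset.mem_compl.mp x.2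
      have hco : ((g1.symm x : {x // ¬ x ∈ S}) : Fin n) = (x : Fin n) := by
        simp [hg1, Equiv.subtypeEquivRight]
        rfl
      rw [hco]
      congr 1
      rw [subtypeCongr_apply', dif_neg hx]
      simp [hg1, hg2, Equiv.subtypeEquivRight]
      rfl

/-- `C(n,k) · per M = ∑_{S,S'} per(M(S,S')) · per(M(S̄,S̄'))`, the sum over pairs of
`k`-element subsets of row and column indices. -/
theorem stmt_10 {n : ℕ} {R : Type*} [CommRing R] (M : Matrix (Fin n) (Fin n) R)
    (k : ℕ) (hk : k ≤ n) :
    (n.choose k : R) * ∑ σ : Equiv.Perm (Fin n), ∏ i, M i (σ i) =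
      ∑ S ∈ powersetCard k (univ : Finset (Fin n)),
        ∑ S' ∈ powersetCard k (univ : Finset (Fin n)),
          subPer M S S' * subPer M Sᶜ S'ᶜ := by
  classical
  have key : ∀ S ∈ powersetCard k (univ : Finset (Fin n)),
      ∑ S' ∈ powersetCard k (univ : Finset (Fin n)), subPer M S S' * subPer M Sᶜ S'ᶜ =
        ∑ σ : Equiv.Perm (Fin n), ∏ i, M i (σ i) := by
    intro S hS
    have hScard : S.card = k := (Finset.mem_powersetCard.mp hS).2
    calc ∑ S' ∈ powersetCard k (univ : Finset (Fin n)), subPer M S S' * subPer M Sᶜ S'ᶜ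
        = ∑ S' ∈ powersetCard k (univ : Finset (Fin n)),
            ∑ σ ∈ Finset.filter
              (fun σ : Equiv.Perm (Fin n) => Finset.image (fun i => σ i) S = S')
              Finset.univ, ∏ i, M i (σ i) := by
          refine Finset.sum_congr rfl fun S' _ => ?_
          rw [subPer_mul_subPer]
          refine Finset.sum_congr ?_ fun _ _ => rfl
          apply Finset.filter_congr
          intro σ _
          constructor
          · intro h
            apply Finset.Subset.antisymm
            · intro j hj
              obtain ⟨i, hi, rfl⟩ := Finset.mem_image.mp hj
              exact (h i).mp hi
            · intro j hj
              have : σ (σ.symm j) ∈ S' := by simpa using hj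
              have := (h (σ.symm j)).mpr this
              exact Finset.mem_image.mpr ⟨σ.symm j, this, by simp⟩
          · intro h i
            constructor
            · intro hi; rw [← h]; exact Finset.mem_image_of_mem _ hi
            · intro hi
              rw [← h] at hi
              obtain ⟨j, hj, hji⟩ := Finset.mem_image.mp hi
              rwa [← σ.injective hji]
      _ = ∑ σ : Equiv.Perm (Fin n), ∏ i, M i (σ i) := by
          apply Finset.sum_fiberwise_of_maps_to
          intro σ _
          rw [Finset.mem_powersetCard]
          exact ⟨Finset.subset_univ _, by rw [Finset.card_image_of_injective _ σ.injective, hScard]⟩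
  rw [Finset.sum_congr rfl key, Finset.sum_const, Finset.card_powersetCard, Finset.card_univ,
    Fintype.card_fin, nsmul_eq_mul]
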